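/- Let F = f + h with f μ-strongly convex and L-smooth and h convex, α = μ/L, x_{k+1} = x_k − (1/L)G_L(x_k), and φ*_{k+1} = (1−α)(φ*_k + α(μ/2)‖v_k − x_k^{++}‖²) + α(F(x_{k+1}) + (1/(2L) − 1/(2μ))‖G_L(x_k)‖²), where x_k^{++} = x_k − (1/μ)G_L(x_k). Then F(x_{k+1}) − φ*_{k+1} ≤ (1 − μ/L)(F(x_k) − φ*_k). -/
import Mathlib


open scoped InnerProductSpace

/-- per-iteration contraction of CUESA with α = μ/L, for F = f + h
satisfying the composite lower bound with proximal gradient G. -/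
theorem cuesa_contraction {n : ℕ}
    (F : EuclideanSpace ℝ (Fin n) → ℝ)
    (G : EuclideanSpace ℝ (Fin n) → EuclideanSpace ℝ (Fin n))  -- proximal gradient
    (μ L : ℝ) (hμ : 0 < μ) (hμL : μ ≤ L)
    (hlb : ∀ u x, F (x - (1 / L) • G x) + ⟪G x, u - x⟫_ℝ + μ / 2 * ‖u - x‖ ^ 2
                + 1 / (2 * L) * ‖G x‖ ^ 2 ≤ F u)
    (xk vk : EuclideanSpace ℝ (Fin n)) (φk : ℝ) :
    F (xk - (1 / L) • G xk)
      - ((1 - μ / L) * (φk + (μ / L) * (μ / 2) * ‖vk - (xk - (1 / μ) • G xk)‖ ^ 2)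
          + (μ / L) * (F (xk - (1 / L) • G xk)
              + (1 / (2 * L) - 1 / (2 * μ)) * ‖G xk‖ ^ 2))
    ≤ (1 - μ / L) * (F xk - φk) := by
  have hL : (0:ℝ) < L := lt_of_lt_of_le hμ hμL
  have key := hlb xk xk
  simp only [sub_self, inner_zero_right, norm_zero] at key
  have hα : μ / L ≤ 1 := (div_le_one hL).2 hμL
  have hα0 : 0 ≤ μ / L := le_of_lt (div_pos hμ hL)
  have hQ : (0:ℝ) ≤ ‖vk - (xk - (1 / μ) • G xk)‖ ^ 2 := sq_nonneg _
  have hN : (0:ℝ) ≤ ‖G xk‖ ^ 2 := sq_nonneg _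
  set A := F (xk - (1 / L) • G xk) with hA
  set B := F xk with hB
  have key' : A + 1 / (2 * L) * ‖G xk‖ ^ 2 ≤ B := by nlinarith [key]
  have hcoef : (μ / L) * (1 / (2 * L) - 1 / (2 * μ)) = -(1 - μ / L) * (1 / (2 * L)) := by
    field_simp
    ring
  nlinarith [mul_le_mul_of_nonneg_left key' (by linarith : (0:ℝ) ≤ 1 - μ / L),
    mul_nonneg (mul_nonneg (by linarith : (0:ℝ) ≤ 1 - μ / L) (mul_nonneg hα0 (by linarith : (0:ℝ) ≤ μ / 2))) hQ]
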